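/- Let K be a field of characteristic p > 0 such that K^×/(K^×)^p is finite. Then K has finite degree of imperfection, i.e., [K : K^p] is finite; in fact [K : K^p] ≤ a bound depending only on |K^×/(K^×)^p| — concretely, if |K^×/(K^×)^p| = p^n then [K : K^p] ≤ p^n. -/
import Mathlib


/-- Let `K` be a field of characteristic `p > 0` with
`|K^×/(K^×)^p| = p^n` finite. Then `K` has finite degree of imperfection, and
`[K : K^p] ≤ p^n`, where `K^p` is the range of the Frobenius. -/
theorem degree_of_imperfection_le {K : Type*} [Field K] (p : ℕ) [Fact p.Prime] [CharP K p]
    (n : ℕ) (hcard : Nat.card (Kˣ ⧸ (powMonoidHom p : Kˣ →* Kˣ).range) = p ^ n) :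
    FiniteDimensional (frobenius K p).fieldRange K ∧
      Module.finrank (frobenius K p).fieldRange K ≤ p ^ n := by
  set k := (frobenius K p).fieldRange with hk
  have hp : p ≠ 0 := (Fact.out : p.Prime).ne_zero
  have hfin : Finite (Kˣ ⧸ (powMonoidHom p : Kˣ →* Kˣ).range) :=
    Nat.finite_of_card_ne_zero (by rw [hcard]; positivity)
  have key : ∀ s : Finset K, (LinearIndependent k fun i : s => (i : K)) → s.card ≤ p ^ n := by
    intro s hs
    have hne : ∀ x : s, (x : K) ≠ 0 := fun x => hs.ne_zero x
    let f : s → Kˣ ⧸ (powMonoidHom p : Kˣ →* Kˣ).range :=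
      fun x => QuotientGroup.mk (Units.mk0 (x : K) (hne x))
    have hf : Function.Injective f := by
      intro i j hij
      have hmem : (Units.mk0 (i : K) (hne i))⁻¹ * Units.mk0 (j : K) (hne j) ∈
          (powMonoidHom p : Kˣ →* Kˣ).range := QuotientGroup.eq.mp hij
      obtain ⟨c, hc⟩ := hmem
      -- (j : K) = (c : K) ^ p * (i : K)
      have hcK : (j : K) = (c : K) ^ p * (i : K) := by
        have := congrArg (fun u : Kˣ => (u : K)) hc
        simp only [powMonoidHom_apply, Units.val_mul, Units.val_pow_eq_pow_val,
          Units.val_inv_eq_inv_val, Units.val_mk0] at this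
        field_simp at this
        exact ((eq_div_iff (hne i)).mp this).symm
      have hamem : (c : K) ^ p ∈ k := ⟨(c : K), rfl⟩
      classical
      by_contra hij'
      have := linearIndependent_iff'.mp hs {i, j}
        (fun t => if t = j then 1 else -(⟨(c : K) ^ p, hamem⟩ : k)) ?_ j (by simp)
      · simp at this
      · rw [Finset.sum_pair hij']
        have : (-(⟨(c : K) ^ p, hamem⟩ : k)) • (i : K) = -((c : K) ^ p * (i : K)) := by
          simp [neg_smul]
          rfl
        simp only [if_neg hij', if_pos rfl, if_true]
        rw [one_smul, this, hcK]
        ring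
    calc s.card = Nat.card s := (Nat.card_eq_finsetCard s).symm
      _ ≤ Nat.card (Kˣ ⧸ (powMonoidHom p : Kˣ →* Kˣ).range) :=
          Nat.card_le_card_of_injective f hf
      _ = p ^ n := hcard
  have hrank : Module.rank k K ≤ (p ^ n : ℕ) := rank_le key
  have hfd : FiniteDimensional k K :=
    Module.rank_lt_aleph0_iff.mp (lt_of_le_of_lt hrank (Cardinal.nat_lt_aleph0 _))
  exact ⟨hfd, Module.finrank_le_of_rank_le hrank⟩
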